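/- Assume a diagram of six triangle functors (i^*, i_*, i^!, j_!, j^*, j_*) between triangulated categories T', T, T'' satisfying that (i^*, i_*, i^!) and (j_!, j^*, j_*) are adjoint triples. If any one of the three rows (i^* and j_!; i_* and j^*; i^! and j_*) is a short exact sequence of triangulated categories, then the diagram is a recollement. -/

import Mathlib

open CategoryTheory Limits Pretriangulated

universe w v u

namespace Paper

section Summands

variable {C : Type*} {D : Type*} [Category C] [Category D]

/-- Every object of the target is a direct summand (retract) of an object in the image. -/
def DenseUpToSummands (F : C ⥤ D) : Prop :=
  ∀ X : D, ∃ (A : C) (s : X ⟶ F.obj A) (r : F.obj A ⟶ X), s ≫ r = 𝟙 X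

/-- A functor is an equivalence up to direct summands if it is fully faithful and
every object of the target is a direct summand of an object in its image. -/
structure IsEquivalenceUpToSummands (F : C ⥤ D) : Prop where
  full : F.Full
  faithful : F.Faithful
  dense : DenseUpToSummands F

end Summands

section SES

variable {T'' T T' : Type*} [Category T''] [Category T']
  [Category T] [HasZeroObject T] [HasShift T ℤ] [Preadditive T]
  [∀ n : ℤ, (shiftFunctor T n).Additive] [Pretriangulated T]

/-- The sequence `T'' ⟶ T ⟶ T'` is a short exact sequence of triangulated categories
up to direct summands: `G` is fully faithful, `F ∘ G = 0`, and the functor induced by `F`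
on the Verdier quotient of `T` by the essential image of `G` is an equivalence up to
direct summands. The Verdier quotient is encoded by the localization of `T` at `S.W`,
for any triangulated subcategory `S` whose objects are exactly those in the essential
image of `G`, and the induced functor is any functor `Fbar` compatible with `F`. -/
structure IsShortExactUpToSummands (G : T'' ⥤ T) (F : T ⥤ T') : Prop where
  full : G.Full
  faithful : G.Faithful
  zero : ∀ X : T'', IsZero (F.obj (G.obj X))
  quotient_equiv :
    ∀ (S : ObjectProperty T) [S.IsTriangulated]
      (_ : ∀ X : T, S X ↔ ∃ A : T'', Nonempty (X ≅ G.obj A))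
      (Fbar : S.trW.Localization ⥤ T') (_ : S.trW.Q ⋙ Fbar ≅ F),
      IsEquivalenceUpToSummands Fbar

/-- The sequence `T'' ⟶ T ⟶ T'` is a short exact sequence of triangulated categories:
`G` is fully faithful, `F ∘ G = 0`, and the functor induced by `F` on the Verdier
quotient of `T` by the essential image of `G` is an equivalence. -/
structure IsShortExact (G : T'' ⥤ T) (F : T ⥤ T') : Prop where
  full : G.Full
  faithful : G.Faithful
  zero : ∀ X : T'', IsZero (F.obj (G.obj X))
  quotient_equiv :
    ∀ (S : ObjectProperty T) [S.IsTriangulated]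
      (_ : ∀ X : T, S X ↔ ∃ A : T'', Nonempty (X ≅ G.obj A))
      (Fbar : S.trW.Localization ⥤ T') (_ : S.trW.Q ⋙ Fbar ≅ F),
      Fbar.IsEquivalence

end SES

section AdjHelpers

variable {C : Type*} {D : Type*} [Category C] [Category D]
variable {F : C ⥤ D} {G : D ⥤ C}

lemma hom_eq_of_isZero_left (adj : F ⊣ G) {A : C} (h : IsZero (F.obj A))
    {B : D} (f g : A ⟶ G.obj B) : f = g :=
  (adj.homEquiv A B).symm.injective (h.eq_of_src _ _)

lemma hom_eq_of_isZero_right (adj : F ⊣ G) {B : D} (h : IsZero (G.obj B))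
    {A : C} (f g : F.obj A ⟶ B) : f = g :=
  (adj.homEquiv A B).injective (h.eq_of_tgt _ _)

lemma counit_postcomp_bijective (adj : F ⊣ G) (hF : F.FullyFaithful) (B : C) (X : D) :
    Function.Bijective (fun (ψ : F.obj B ⟶ F.obj (G.obj X)) => ψ ≫ adj.counit.app X) := by
  have : (fun (ψ : F.obj B ⟶ F.obj (G.obj X)) => ψ ≫ adj.counit.app X)
      = fun ψ => (adj.homEquiv B X).symm (hF.homEquiv.symm ψ) := by
    funext ψ
    rw [Adjunction.homEquiv_counit]
    congr 1
    exact (hF.map_preimage ψ).symm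
  rw [this]
  exact (hF.homEquiv.symm.trans (adj.homEquiv B X).symm).bijective

lemma counit_postcomp_bijective' (adj : F ⊣ G) (hF : F.FullyFaithful)
    {Z : D} {B : C} (e : Z ≅ F.obj B) (X : D) :
    Function.Bijective (fun (ψ : Z ⟶ F.obj (G.obj X)) => ψ ≫ adj.counit.app X) := by
  have h := counit_postcomp_bijective adj hF B X
  constructor
  · intro ψ₁ ψ₂ hh
    have h1 : (e.inv ≫ ψ₁) ≫ adj.counit.app X = (e.inv ≫ ψ₂) ≫ adj.counit.app X := by
      simp only [Category.assoc]
      exact congrArg (fun t => e.inv ≫ t) hh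
    have := h.1 h1
    calc ψ₁ = e.hom ≫ (e.inv ≫ ψ₁) := by simp
    _ = e.hom ≫ (e.inv ≫ ψ₂) := by rw [this]
    _ = ψ₂ := by simp
  · intro ρ
    obtain ⟨ψ₀, hψ₀⟩ := h.2 (e.inv ≫ ρ)
    exact ⟨e.hom ≫ ψ₀, by simp only [Category.assoc, hψ₀]; simp⟩

end AdjHelpers

section LocAdj

variable {C : Type*} {D : Type*} [Category C] [Category D]

lemma isIso_counit_of_isLocalization (L : C ⥤ D) (W : MorphismProperty C)
    [L.IsLocalization W] {R : D ⥤ C} (adj : L ⊣ R) : IsIso adj.counit := by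
  have hfull : ((Functor.whiskeringLeft C D D).obj L).Full := Localization.full_whiskeringLeft L W D
  have hfaith : ((Functor.whiskeringLeft C D D).obj L).Faithful := Localization.faithful_whiskeringLeft L W D
  let Wh := (Functor.whiskeringLeft C D D).obj L
  let μ₀ : Wh.obj (𝟭 D) ⟶ Wh.obj (R ⋙ L) :=
    { app := fun X => L.map (adj.unit.app X)
      naturality := by
        intro X Y f
        dsimp [Wh]
        rw [← L.map_comp, ← L.map_comp]
        congr 1
        simpa using adj.unit.naturality f }
  let μ : 𝟭 D ⟶ R ⋙ L := Wh.preimage μ₀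
  have hμ : ∀ X : C, μ.app (L.obj X) = L.map (adj.unit.app X) := by
    intro X
    have := Wh.map_preimage μ₀
    exact congrArg (fun (t : Wh.obj (𝟭 D) ⟶ Wh.obj (R ⋙ L)) => t.app X) this
  have h1 : adj.counit ≫ μ = 𝟙 (R ⋙ L) := by
    apply hfaith.map_injective
    ext X
    dsimp [Wh]
    have hnat := μ.naturality (adj.counit.app (L.obj X))
    dsimp at hnat
    calc adj.counit.app (L.obj X) ≫ μ.app (L.obj X)
        = μ.app (L.obj (R.obj (L.obj X))) ≫ L.map (R.map (adj.counit.app (L.obj X))) := hnat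
      _ = L.map (adj.unit.app (R.obj (L.obj X))) ≫ L.map (R.map (adj.counit.app (L.obj X))) := by
          rw [hμ]
      _ = 𝟙 _ := by rw [← L.map_comp, adj.right_triangle_components]; simp
  have h2 : μ ≫ adj.counit = 𝟙 (𝟭 D) := by
    apply hfaith.map_injective
    ext X
    dsimp [Wh]
    rw [hμ]
    exact adj.left_triangle_components X
  exact ⟨μ, h1, h2⟩

lemma isIso_unit_of_isLocalization (L : C ⥤ D) (W : MorphismProperty C)
    [L.IsLocalization W] {F : D ⥤ C} (adj : F ⊣ L) : IsIso adj.unit := by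
  have hfull : ((Functor.whiskeringLeft C D D).obj L).Full := Localization.full_whiskeringLeft L W D
  have hfaith : ((Functor.whiskeringLeft C D D).obj L).Faithful := Localization.faithful_whiskeringLeft L W D
  let Wh := (Functor.whiskeringLeft C D D).obj L
  let ν₀ : Wh.obj (F ⋙ L) ⟶ Wh.obj (𝟭 D) :=
    { app := fun X => L.map (adj.counit.app X)
      naturality := by
        intro X Y f
        dsimp [Wh]
        rw [← L.map_comp, ← L.map_comp]
        congr 1
        simpa using adj.counit.naturality f }
  let ν : F ⋙ L ⟶ 𝟭 D := Wh.preimage ν₀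
  have hν : ∀ X : C, ν.app (L.obj X) = L.map (adj.counit.app X) := by
    intro X
    have := Wh.map_preimage ν₀
    exact congrArg (fun (t : Wh.obj (F ⋙ L) ⟶ Wh.obj (𝟭 D)) => t.app X) this
  have h1 : adj.unit ≫ ν = 𝟙 (𝟭 D) := by
    apply hfaith.map_injective
    ext X
    dsimp [Wh]
    rw [hν, adj.right_triangle_components]
  have h2 : ν ≫ adj.unit = 𝟙 (F ⋙ L) := by
    apply hfaith.map_injective
    ext X
    dsimp [Wh]
    have hnat := ν.naturality (adj.unit.app (L.obj X))
    dsimp at hnat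
    calc ν.app (L.obj X) ≫ adj.unit.app (L.obj X)
        = L.map (F.map (adj.unit.app (L.obj X))) ≫ ν.app (L.obj (F.obj (L.obj X))) := hnat.symm
      _ = L.map (F.map (adj.unit.app (L.obj X))) ≫ L.map (adj.counit.app (F.obj (L.obj X))) := by
          rw [hν]
      _ = 𝟙 _ := by
          rw [← L.map_comp]
          exact (congrArg L.map (adj.left_triangle_components _)).trans (L.map_id _)
  exact ⟨ν, h1, h2⟩

end LocAdj

section Triple

variable {A : Type*} {B : Type*} [Category A] [Category B]
variable {F : A ⥤ B} {G : B ⥤ A} {H : A ⥤ B}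

/-- In an adjoint triple `F ⊣ G ⊣ H`, if the unit of `F ⊣ G` is an isomorphism
(i.e. `F` is fully faithful), then the counit of `G ⊣ H` is an isomorphism. -/
lemma isIso_counit_of_isIso_unit (b₁ : F ⊣ G) (b₂ : G ⊣ H) [IsIso b₁.unit] :
    IsIso b₂.counit := by
  have e : 𝟭 A ≅ F ⋙ G := asIso b₁.unit
  have : (F ⋙ G).IsEquivalence := Functor.isEquivalence_of_iso e
  have hcomp : IsIso (b₁.comp b₂).counit := inferInstance
  have happ : ∀ X : A, IsIso (b₂.counit.app X) := by
    intro X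
    have hful : F.Full := b₁.fullyFaithfulLOfIsIsoUnit.full
    have hfai : F.Faithful := b₁.fullyFaithfulLOfIsIsoUnit.faithful
    have h1 : IsIso (G.map (b₁.counit.app (H.obj X))) := inferInstance
    have h2 : IsIso ((b₁.comp b₂).counit.app X) := inferInstance
    rw [Adjunction.comp_counit_app] at h2
    exact IsIso.of_isIso_comp_left (G.map (b₁.counit.app (H.obj X))) _
  exact NatIso.isIso_of_isIso_app _

/-- In an adjoint triple `F ⊣ G ⊣ H`, if the counit of `G ⊣ H` is an isomorphism
(i.e. `H` is fully faithful), then the unit of `F ⊣ G` is an isomorphism. -/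
lemma isIso_unit_of_isIso_counit (b₁ : F ⊣ G) (b₂ : G ⊣ H) [IsIso b₂.counit] :
    IsIso b₁.unit := by
  have e : H ⋙ G ≅ 𝟭 A := asIso b₂.counit
  have : (H ⋙ G).IsEquivalence := (Functor.isEquivalence_of_iso e.symm : (H ⋙ G).IsEquivalence)
  have hcomp : IsIso (b₁.comp b₂).unit := inferInstance
  have happ : ∀ X : A, IsIso (b₁.unit.app X) := by
    intro X
    have hful : H.Full := b₂.fullyFaithfulROfIsIsoCounit.full
    have hfai : H.Faithful := b₂.fullyFaithfulROfIsIsoCounit.faithful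
    have h1 : IsIso (G.map (b₂.unit.app (F.obj X))) := inferInstance
    have h2 : IsIso ((b₁.comp b₂).unit.app X) := inferInstance
    rw [Adjunction.comp_unit_app] at h2
    exact IsIso.of_isIso_comp_right _ (G.map (b₂.unit.app (F.obj X)))
  exact NatIso.isIso_of_isIso_app _

end Triple

section Pretriang

variable {T : Type*} [Category T] [HasZeroObject T] [HasShift T ℤ] [Preadditive T]
  [∀ n : ℤ, (shiftFunctor T n).Additive] [Pretriangulated T]

/-- Covariant orthogonality: if `Hom(C, -)` vanishes on a triangulated subcategory `S`
and `L` is a localization at `S.W`, then `Hom(C, Y) = 0` whenever `L.obj Y` is zero. -/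
lemma orth_cov {E : Type*} [Category E]
    (S : ObjectProperty T) [S.IsTriangulated] (L : T ⥤ E) [L.IsLocalization S.trW]
    (C : T) (hC : ∀ (Z : T), S Z → ∀ (f : C ⟶ Z), f = 0)
    {Y : T} (hY : IsZero (L.obj Y)) (f : C ⟶ Y) : f = 0 := by
  let F₀ : T ⥤ Type _ := coyoneda.obj (Opposite.op C)
  have hinv : S.trW.IsInvertedBy F₀ := by
    intro X Y' w hw
    obtain ⟨Z, gz, hz, hTz, hZ⟩ := hw
    rw [isIso_iff_bijective]
    show Function.Bijective (fun (φ : C ⟶ X) => φ ≫ w)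
    constructor
    · intro φ₁ φ₂ hh
      have h' : φ₁ ≫ w = φ₂ ≫ w := hh
      have h0 : (φ₁ - φ₂) ≫ w = 0 := by rw [Preadditive.sub_comp, h', sub_self]
      obtain ⟨q, hq⟩ := Triangle.coyoneda_exact₂ _
        (inv_rot_of_distTriang _ hTz) (φ₁ - φ₂) h0
      rw [hC _ (S.le_shift (-1) Z hZ) q] at hq
      exact sub_eq_zero.mp (hq.trans zero_comp)
    · intro ρ
      obtain ⟨q, hq⟩ := Triangle.coyoneda_exact₂ _ hTz ρ (hC Z hZ _)
      exact ⟨q, hq.symm⟩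
  let Fbar := Localization.lift F₀ hinv L
  have α : L ⋙ Fbar ≅ F₀ := Localization.fac F₀ hinv L
  have h01 : L.map (𝟙 Y) = L.map (0 : Y ⟶ Y) := hY.eq_of_src _ _
  have r : ∀ u : Y ⟶ Y, F₀.map u = α.inv.app Y ≫ (L ⋙ Fbar).map u ≫ α.hom.app Y := by
    intro u
    rw [α.hom.naturality u, Iso.inv_hom_id_app_assoc]
  have e1 : (L ⋙ Fbar).map (𝟙 Y) = (L ⋙ Fbar).map (0 : Y ⟶ Y) := by
    show Fbar.map (L.map (𝟙 Y)) = Fbar.map (L.map (0 : Y ⟶ Y))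
    rw [h01]
  have key : F₀.map (𝟙 Y) = F₀.map (0 : Y ⟶ Y) := by
    rw [r (𝟙 Y), r (0 : Y ⟶ Y), e1]
  have hf := congrArg (fun h => h f) key
  simpa [F₀] using hf

/-- Contravariant orthogonality: if `Hom(-, C)` vanishes on a triangulated subcategory `S`
and `L` is a localization at `S.W`, then `Hom(Y, C) = 0` whenever `L.obj Y` is zero. -/
lemma orth_contra {E : Type*} [Category E]
    (S : ObjectProperty T) [S.IsTriangulated] (L : T ⥤ E) [L.IsLocalization S.trW]
    (C : T) (hC : ∀ (Z : T), S Z → ∀ (f : Z ⟶ C), f = 0)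
    {Y : T} (hY : IsZero (L.obj Y)) (f : Y ⟶ C) : f = 0 := by
  let F₀ : Tᵒᵖ ⥤ Type _ := yoneda.obj C
  have hinv : S.trW.op.IsInvertedBy F₀ := by
    intro X Y' w hw
    obtain ⟨Z, gz, hz, hTz, hZ⟩ := (hw : S.trW w.unop)
    rw [isIso_iff_bijective]
    show Function.Bijective (fun (φ : X.unop ⟶ C) => w.unop ≫ φ)
    constructor
    · intro φ₁ φ₂ hh
      have h' : w.unop ≫ φ₁ = w.unop ≫ φ₂ := hh
      have h0 : w.unop ≫ (φ₁ - φ₂) = 0 := by rw [Preadditive.comp_sub, h', sub_self]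
      obtain ⟨q, hq⟩ := Triangle.yoneda_exact₂ _ hTz (φ₁ - φ₂) h0
      rw [hC _ hZ q] at hq
      exact sub_eq_zero.mp (hq.trans comp_zero)
    · intro ψ
      obtain ⟨q, hq⟩ := Triangle.yoneda_exact₂ _
        (inv_rot_of_distTriang _ hTz) ψ (hC _ (S.le_shift (-1) Z hZ) _)
      exact ⟨q, hq.symm⟩
  let Fbar := Localization.lift F₀ hinv L.op
  have α : L.op ⋙ Fbar ≅ F₀ := Localization.fac F₀ hinv L.op
  have h01 : L.op.map (𝟙 (Opposite.op Y)) = L.op.map ((0 : Y ⟶ Y).op) :=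
    congrArg Quiver.Hom.op (hY.eq_of_src _ _)
  have r : ∀ u : Opposite.op Y ⟶ Opposite.op Y,
      F₀.map u = α.inv.app (Opposite.op Y) ≫ (L.op ⋙ Fbar).map u ≫ α.hom.app (Opposite.op Y) := by
    intro u
    rw [α.hom.naturality u, Iso.inv_hom_id_app_assoc]
  have e1 : (L.op ⋙ Fbar).map (𝟙 (Opposite.op Y)) = (L.op ⋙ Fbar).map ((0 : Y ⟶ Y).op) := by
    show Fbar.map (L.op.map (𝟙 (Opposite.op Y))) = Fbar.map (L.op.map ((0 : Y ⟶ Y).op))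
    rw [h01]
  have key : F₀.map (𝟙 (Opposite.op Y)) = F₀.map ((0 : Y ⟶ Y).op) := by
    rw [r (𝟙 (Opposite.op Y)), r ((0 : Y ⟶ Y).op), e1]
  have hf := congrArg (fun h => h f) key
  simpa [F₀] using hf

/-- Post-composition with the first map of a distinguished triangle is bijective
on morphisms from `Z` when `Hom(Z, obj₃)` and `Hom(Z, obj₃⟦-1⟧)` vanish. -/
lemma mor₁_postcomp_bijective (D : Triangle T) (hD : D ∈ distTriang T) (Z : T)
    (h3 : ∀ f : Z ⟶ D.obj₃, f = 0) (h3' : ∀ f : Z ⟶ D.obj₃⟦(-1 : ℤ)⟧, f = 0) :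
    Function.Bijective (fun (φ : Z ⟶ D.obj₁) => φ ≫ D.mor₁) := by
  constructor
  · intro φ₁ φ₂ hh
    have hh' : φ₁ ≫ D.mor₁ = φ₂ ≫ D.mor₁ := hh
    have h0 : (φ₁ - φ₂) ≫ D.mor₁ = 0 := by
      rw [Preadditive.sub_comp, hh', sub_self]
    obtain ⟨q, hq⟩ := Triangle.coyoneda_exact₂ _ (inv_rot_of_distTriang _ hD) (φ₁ - φ₂) h0
    rw [h3' q] at hq
    exact sub_eq_zero.mp (hq.trans zero_comp)
  · intro ρ
    obtain ⟨q, hq⟩ := Triangle.coyoneda_exact₂ _ hD ρ (h3 _)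
    exact ⟨q, hq.symm⟩

section EssImage

open ZeroObject

variable {T₀ : Type*} [Category T₀] [HasZeroObject T₀] [HasShift T₀ ℤ] [Preadditive T₀]
  [∀ n : ℤ, (shiftFunctor T₀ n).Additive] [Pretriangulated T₀]

/-- The essential image of a fully faithful triangulated functor, as a
triangulated subcategory. -/
def essImageSubcat (G : T₀ ⥤ T) [G.Full] [G.Faithful] [G.CommShift ℤ] [G.IsTriangulated] :
    ObjectProperty T := fun X => ∃ A : T₀, Nonempty (X ≅ G.obj A)

instance essImageSubcat_isTriangulated (G : T₀ ⥤ T) [G.Full] [G.Faithful] [G.CommShift ℤ]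
    [G.IsTriangulated] : (essImageSubcat G).IsTriangulated where
  exists_zero := ⟨G.obj 0, G.map_isZero (isZero_zero T₀), ⟨0, ⟨Iso.refl _⟩⟩⟩
  isStableUnderShiftBy n := ⟨fun X => by
    rintro ⟨A, ⟨e⟩⟩
    exact ⟨A⟦n⟧, ⟨(shiftFunctor T n).mapIso e ≪≫ ((G.commShiftIso n).app A).symm⟩⟩⟩
  ext₂' D hD := by
    rintro ⟨A₁, ⟨e₁⟩⟩ ⟨A₃, ⟨e₃⟩⟩
    let v : A₃ ⟶ A₁⟦(1 : ℤ)⟧ :=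
      G.preimage (e₃.inv ≫ D.mor₃ ≫ e₁.hom⟦(1 : ℤ)⟧' ≫ (G.commShiftIso (1 : ℤ)).inv.app A₁)
    obtain ⟨B, f, g, hD'⟩ := distinguished_cocone_triangle₂ v
    have hG := G.map_distinguished _ hD'
    have harrow : Arrow.mk (((rotate T).obj ((rotate T).obj D)).mor₁) ≅
        Arrow.mk ((G.mapTriangle.obj (Triangle.mk f g v)).rotate.rotate.mor₁) := by
      refine Arrow.isoMk e₃ ((shiftFunctor T (1 : ℤ)).mapIso e₁) ?_
      change e₃.hom ≫ (G.map v ≫ (G.commShiftIso (1 : ℤ)).hom.app A₁) =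
        D.mor₃ ≫ (shiftFunctor T (1 : ℤ)).map e₁.hom
      simp [v]
    obtain ⟨e', -⟩ := exists_iso_of_arrow_iso _ _
      (rot_of_distTriang _ (rot_of_distTriang _ hD))
      (rot_of_distTriang _ (rot_of_distTriang _ hG)) harrow
    -- third components: D.obj₂⟦1⟧ ≅ (G.obj B)⟦1⟧
    have e₂ : D.obj₂⟦(1 : ℤ)⟧ ≅ (G.obj B)⟦(1 : ℤ)⟧ := Triangle.π₃.mapIso e'
    refine ⟨G.obj B, ⟨B, ⟨Iso.refl _⟩⟩, ⟨?_⟩⟩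
    calc D.obj₂ ≅ D.obj₂⟦(1 : ℤ)⟧⟦(-1 : ℤ)⟧ :=
          ((shiftFunctorCompIsoId T (1 : ℤ) (-1 : ℤ) (by omega)).app D.obj₂).symm
    _ ≅ (G.obj B)⟦(1 : ℤ)⟧⟦(-1 : ℤ)⟧ := (shiftFunctor T (-1 : ℤ)).mapIso e₂
    _ ≅ G.obj B := (shiftFunctorCompIsoId T (1 : ℤ) (-1 : ℤ) (by omega)).app (G.obj B)

end EssImage

section Glue

variable {T₀ : Type*} [Category T₀] [HasZeroObject T₀] [HasShift T₀ ℤ] [Preadditive T₀]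
  [∀ n : ℤ, (shiftFunctor T₀ n).Additive] [Pretriangulated T₀]
variable {T₁ : Type*} [Category T₁] [HasZeroObject T₁] [HasShift T₁ ℤ] [Preadditive T₁]
  [∀ n : ℤ, (shiftFunctor T₁ n).Additive] [Pretriangulated T₁]

/-- The gluing triangle for a recollement-type situation. -/
lemma glue_triangle (L₁ : T₀ ⥤ T) (M : T ⥤ T₀) (N : T ⥤ T₁) (R₁ : T₁ ⥤ T)
    [L₁.Full] [L₁.Faithful] [N.CommShift ℤ] [N.IsTriangulated] [R₁.CommShift ℤ]
    (adjLM : L₁ ⊣ M) (adjNR : N ⊣ R₁)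
    (hcounit : ∀ X : T₁, IsIso (adjNR.counit.app X))
    (hzero : ∀ (B : T₀) (B' : T₁) (f : L₁.obj B ⟶ R₁.obj B'), f = 0)
    (hmem : ∀ Y : T, IsZero (N.obj Y) → ∃ B : T₀, Nonempty (Y ≅ L₁.obj B))
    (X : T) :
    ∃ h : R₁.obj (N.obj X) ⟶ (L₁.obj (M.obj X))⟦(1 : ℤ)⟧,
      Triangle.mk (adjLM.counit.app X) (adjNR.unit.app X) h ∈ distTriang T := by
  set u := adjNR.unit.app X with hu
  haveI : ∀ Z : T₁, IsIso (adjNR.counit.app Z) := hcounit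
  haveI : IsIso adjNR.counit := NatIso.isIso_of_isIso_app _
  haveI hR₁full : R₁.Full := adjNR.fullyFaithfulROfIsIsoCounit.full
  haveI hR₁faithful : R₁.Faithful := adjNR.fullyFaithfulROfIsIsoCounit.faithful
  have hNu : IsIso (N.map u) := by rw [hu]; infer_instance
  obtain ⟨Y, g, w, hT₁⟩ := distinguished_cocone_triangle₁ u
  have hNY : IsZero (N.obj Y) := by
    apply Triangle.isZero₁_of_isIso₂ _ (N.map_distinguished _ hT₁)
    dsimp
    exact hNu
  obtain ⟨B₀, ⟨e⟩⟩ := hmem Y hNY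
  have hεu : adjLM.counit.app X ≫ u = 0 := hzero _ _ _
  obtain ⟨φ, hφ⟩ : ∃ φ : L₁.obj (M.obj X) ⟶ Y, adjLM.counit.app X = φ ≫ g :=
    Triangle.coyoneda_exact₂ _ hT₁ (adjLM.counit.app X) hεu
  -- hφ : adjLM.counit.app X = φ ≫ g
  have h3 : ∀ f : Y ⟶ R₁.obj (N.obj X), f = 0 := by
    intro f
    exact hom_eq_of_isZero_left adjNR hNY f 0
  have h3' : ∀ f : Y ⟶ (R₁.obj (N.obj X))⟦(-1 : ℤ)⟧, f = 0 := by
    intro f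
    have h0 : f ≫ ((R₁.commShiftIso (-1 : ℤ)).app (N.obj X)).symm.hom = 0 :=
      hom_eq_of_isZero_left adjNR hNY _ 0
    calc f = (f ≫ ((R₁.commShiftIso (-1 : ℤ)).app (N.obj X)).symm.hom) ≫
          ((R₁.commShiftIso (-1 : ℤ)).app (N.obj X)).symm.inv := by simp
    _ = 0 := by rw [h0, zero_comp]
  have bijg := mor₁_postcomp_bijective _ hT₁ Y h3 h3'
  have FF : L₁.FullyFaithful := Functor.FullyFaithful.ofFullyFaithful L₁
  obtain ⟨ψ, hψ₀⟩ := (counit_postcomp_bijective' adjLM FF e X).2 g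
  have hψ : ψ ≫ adjLM.counit.app X = g := hψ₀
  have hφψ : φ ≫ ψ = 𝟙 _ := by
    apply (counit_postcomp_bijective' adjLM FF (Iso.refl (L₁.obj (M.obj X))) X).1
    show (φ ≫ ψ) ≫ adjLM.counit.app X = 𝟙 _ ≫ adjLM.counit.app X
    rw [Category.assoc, hψ, Category.id_comp, hφ]
  have hψφ : ψ ≫ φ = 𝟙 Y := by
    apply bijg.1
    show (ψ ≫ φ) ≫ g = 𝟙 Y ≫ g
    rw [Category.assoc, ← hφ, hψ, Category.id_comp]
  have : IsIso φ := ⟨ψ, hφψ, hψφ⟩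
  refine ⟨w ≫ inv ((shiftFunctor T (1 : ℤ)).map φ), isomorphic_distinguished _ hT₁ _ ?_⟩
  refine Triangle.isoMk _ _ (@asIso _ _ _ _ φ this) (Iso.refl _) (Iso.refl _) ?_ ?_ ?_
  · dsimp
    exact (Category.comp_id _).trans hφ
  · dsimp
    exact (Category.comp_id _).trans (Category.id_comp _).symm
  · dsimp
    exact (Category.assoc _ _ _).trans ((congrArg (fun t => w ≫ t) (IsIso.inv_hom_id ((shiftFunctor T (1 : ℤ)).map φ))).trans
      ((Category.comp_id _).trans (Category.id_comp _).symm))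

/-- If an object is killed by both `iStar` and `jStar`, and every object killed by
`jStar` is in the essential image of `iS`, then the object is zero. -/
lemma isZero_of_isZero_both {T' : Type*} [Category T']
    {T'' : Type*} [Category T'']
    (iStar : T ⥤ T') (iS : T' ⥤ T) (jStar : T ⥤ T'')
    [iS.Full] [iS.Faithful] (a₁ : iStar ⊣ iS)
    [HasZeroObject T'] [HasShift T' ℤ] [Preadditive T']
    [∀ n : ℤ, (shiftFunctor T' n).Additive] [Pretriangulated T']
    [iS.CommShift ℤ] [iS.IsTriangulated]
    (h6 : ∀ Y : T, IsZero (jStar.obj Y) → ∃ A : T', Nonempty (Y ≅ iS.obj A))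
    (K : T) (hj : IsZero (jStar.obj K)) (hi : IsZero (iStar.obj K)) : IsZero K := by
  obtain ⟨A, ⟨e⟩⟩ := h6 K hj
  have h1 : IsZero (iStar.obj (iS.obj A)) := hi.of_iso (iStar.mapIso e).symm
  have h2 : IsZero A := h1.of_iso (asIso (a₁.counit.app A)).symm
  exact (iS.map_isZero h2).of_iso e

/-- Membership in the essential image of `jShriek` for objects killed by `iStar`. -/
lemma mem_jShriek_of_isZero {T' : Type*} [Category T']
    {T'' : Type*} [Category T'']
    (iStar : T ⥤ T') (iS : T' ⥤ T) (jShriek : T'' ⥤ T) (jStar : T ⥤ T'')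
    [iS.Full] [iS.Faithful] [jShriek.Full] [jShriek.Faithful]
    (a₁ : iStar ⊣ iS) (b₁ : jShriek ⊣ jStar)
    [HasZeroObject T'] [HasShift T' ℤ] [Preadditive T']
    [∀ n : ℤ, (shiftFunctor T' n).Additive] [Pretriangulated T']
    [HasZeroObject T''] [HasShift T'' ℤ] [Preadditive T'']
    [∀ n : ℤ, (shiftFunctor T'' n).Additive] [Pretriangulated T'']
    [iS.CommShift ℤ] [iS.IsTriangulated]
    [iStar.CommShift ℤ] [iStar.IsTriangulated]
    [jStar.CommShift ℤ] [jStar.IsTriangulated]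
    (h5 : ∀ B : T'', IsZero (iStar.obj (jShriek.obj B)))
    (h6 : ∀ Y : T, IsZero (jStar.obj Y) → ∃ A : T', Nonempty (Y ≅ iS.obj A))
    (Z : T) (hZ : IsZero (iStar.obj Z)) : ∃ B : T'', Nonempty (Z ≅ jShriek.obj B) := by
  obtain ⟨K, m, w, hT⟩ := distinguished_cocone_triangle (b₁.counit.app Z)
  have hjK : IsZero (jStar.obj K) := by
    apply Triangle.isZero₃_of_isIso₁ _ (jStar.map_distinguished _ hT)
    change IsIso (jStar.map (b₁.counit.app Z))
    infer_instance
  have hiK : IsZero (iStar.obj K) := by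
    exact Triangle.isZero₃_of_isZero₁₂ _ (iStar.map_distinguished _ hT) (h5 _) hZ
  have hK : IsZero K := isZero_of_isZero_both iStar iS jStar a₁ h6 K hjK hiK
  have : IsIso (b₁.counit.app Z) := (Triangle.isZero₃_iff_isIso₁ _ hT).1 hK
  exact ⟨jStar.obj Z, ⟨(asIso (b₁.counit.app Z)).symm⟩⟩

end Glue

end Pretriang


section LocSES

variable {T'' : Type*} [Category T''] [HasZeroObject T''] [HasShift T'' ℤ] [Preadditive T'']
  [∀ n : ℤ, (shiftFunctor T'' n).Additive] [Pretriangulated T'']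
variable {T : Type*} [Category T] [HasZeroObject T] [HasShift T ℤ] [Preadditive T]
  [∀ n : ℤ, (shiftFunctor T n).Additive] [Pretriangulated T]
variable {T' : Type*} [Category T'] [HasZeroObject T'] [HasShift T' ℤ] [Preadditive T']
  [∀ n : ℤ, (shiftFunctor T' n).Additive] [Pretriangulated T']

lemma IsShortExact.isLocalization {G : T'' ⥤ T} {F : T ⥤ T'}
    [G.Full] [G.Faithful] [G.CommShift ℤ] [G.IsTriangulated]
    [F.CommShift ℤ] [F.IsTriangulated]
    (hse : IsShortExact G F) : F.IsLocalization (essImageSubcat G).trW := by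
  have hinv : (essImageSubcat G).trW.IsInvertedBy F := by
    rintro X Y w ⟨Z, gz, hz, hTz, A, ⟨e⟩⟩
    have hz' : IsZero (F.obj Z) := (hse.zero A).of_iso (F.mapIso e)
    exact (Triangle.isZero₃_iff_isIso₁ _ (F.map_distinguished _ hTz)).1 hz'
  let Fbar := Localization.lift F hinv (essImageSubcat G).trW.Q
  have α : (essImageSubcat G).trW.Q ⋙ Fbar ≅ F := Localization.fac F hinv _
  have : Fbar.IsEquivalence := hse.quotient_equiv (essImageSubcat G) (fun X => Iff.rfl) Fbar α
  exact Functor.IsLocalization.of_equivalence_target (essImageSubcat G).trW.Q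
    (essImageSubcat G).trW F Fbar.asEquivalence α

end LocSES


/-- Given six triangle functors `(i^*, i_*, i^!, j_!, j^*, j_*)` such
that `(i^*, i_*, i^!)` and `(j_!, j^*, j_*)` are adjoint triples, if any one of the three
rows (`j_!, i^*`), (`i_*, j^*`), (`j_*, i^!`) is a short exact sequence of triangulated
categories, then the diagram is a recollement: `i_*`, `j_!`, `j_*` are fully faithful,
`j^* ∘ i_* = 0`, and the two gluing triangles exist. -/
theorem statement5
    {T' T T'' : Type u}
    [Category.{v} T'] [HasZeroObject T'] [HasShift T' ℤ] [Preadditive T']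
    [∀ n : ℤ, (shiftFunctor T' n).Additive] [Pretriangulated T']
    [Category.{v} T] [HasZeroObject T] [HasShift T ℤ] [Preadditive T]
    [∀ n : ℤ, (shiftFunctor T n).Additive] [Pretriangulated T]
    [Category.{v} T''] [HasZeroObject T''] [HasShift T'' ℤ] [Preadditive T'']
    [∀ n : ℤ, (shiftFunctor T'' n).Additive] [Pretriangulated T'']
    (iStar : T ⥤ T') [iStar.CommShift ℤ] [iStar.IsTriangulated]
    (iS : T' ⥤ T) [iS.CommShift ℤ] [iS.IsTriangulated]
    (iShriek : T ⥤ T') [iShriek.CommShift ℤ] [iShriek.IsTriangulated]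
    (jShriek : T'' ⥤ T) [jShriek.CommShift ℤ] [jShriek.IsTriangulated]
    (jStar : T ⥤ T'') [jStar.CommShift ℤ] [jStar.IsTriangulated]
    (jS : T'' ⥤ T) [jS.CommShift ℤ] [jS.IsTriangulated]
    (a₁ : iStar ⊣ iS) (a₂ : iS ⊣ iShriek) (b₁ : jShriek ⊣ jStar) (b₂ : jStar ⊣ jS)
    (hrow : IsShortExact jShriek iStar ∨ IsShortExact iS jStar ∨ IsShortExact jS iShriek) :
    iS.Full ∧ iS.Faithful ∧ jShriek.Full ∧ jShriek.Faithful ∧ jS.Full ∧ jS.Faithful ∧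
    (∀ X : T', IsZero (jStar.obj (iS.obj X))) ∧
    (∀ X : T, ∃ h : jS.obj (jStar.obj X) ⟶ (iS.obj (iShriek.obj X))⟦(1 : ℤ)⟧,
        Triangle.mk (a₂.counit.app X) (b₂.unit.app X) h ∈ distTriang T) ∧
    (∀ X : T, ∃ h : iS.obj (iStar.obj X) ⟶ (jShriek.obj (jStar.obj X))⟦(1 : ℤ)⟧,
        Triangle.mk (b₁.counit.app X) (a₁.unit.app X) h ∈ distTriang T) := by
  obtain hse | hse | hse := hrow
  · -- Case 1: the row (jShriek, iStar) is a short exact sequence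
    haveI := hse.full
    haveI := hse.faithful
    haveI : iStar.IsLocalization (essImageSubcat jShriek).trW := hse.isLocalization
    haveI ha1c : IsIso a₁.counit :=
      isIso_counit_of_isLocalization iStar (essImageSubcat jShriek).trW a₁
    haveI : iS.Full := a₁.fullyFaithfulROfIsIsoCounit.full
    haveI : iS.Faithful := a₁.fullyFaithfulROfIsIsoCounit.faithful
    haveI : IsIso b₁.unit := inferInstance
    haveI : IsIso b₂.counit := isIso_counit_of_isIso_unit b₁ b₂
    haveI : jS.Full := b₂.fullyFaithfulROfIsIsoCounit.full
    haveI : jS.Faithful := b₂.fullyFaithfulROfIsIsoCounit.faithful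
    have hJI : ∀ (B : T'') (A : T') (f g : jShriek.obj B ⟶ iS.obj A), f = g := fun B A f g =>
      hom_eq_of_isZero_left a₁ (hse.zero B) f g
    have H4 : ∀ A : T', IsZero (jStar.obj (iS.obj A)) := by
      intro A
      rw [IsZero.iff_id_eq_zero]
      exact (b₁.homEquiv _ _).symm.injective (hJI _ _ _ _)
    have H6 : ∀ Y : T, IsZero (jStar.obj Y) → ∃ A : T', Nonempty (Y ≅ iS.obj A) := by
      intro Y hY
      obtain ⟨V, gV, wV, hTV⟩ := distinguished_cocone_triangle₁ (a₁.unit.app Y)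
      have hiV : IsZero (iStar.obj V) := by
        apply Triangle.isZero₁_of_isIso₂ _ (iStar.map_distinguished _ hTV)
        change IsIso (iStar.map (a₁.unit.app Y))
        infer_instance
      have hjV : IsZero (jStar.obj V) :=
        Triangle.isZero₁_of_isZero₂₃ _ (jStar.map_distinguished _ hTV) hY (H4 _)
      have hallz : ∀ (Z : T), (essImageSubcat jShriek) Z → ∀ f : Z ⟶ V, f = 0 := by
        rintro Z ⟨B, ⟨e⟩⟩ f
        have h0 : e.inv ≫ f = 0 := hom_eq_of_isZero_right b₁ hjV (e.inv ≫ f) 0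
        calc f = e.hom ≫ (e.inv ≫ f) := by simp
        _ = 0 := by rw [h0, comp_zero]
      have hV : IsZero V := by
        rw [IsZero.iff_id_eq_zero]
        exact orth_contra (essImageSubcat jShriek) iStar V hallz hiV (𝟙 V)
      have : IsIso (a₁.unit.app Y) := (Triangle.isZero₁_iff_isIso₂ _ hTV).1 hV
      exact ⟨iStar.obj Y, ⟨asIso (a₁.unit.app Y)⟩⟩
    have H7 : ∀ Z : T, IsZero (iStar.obj Z) → ∃ B : T'', Nonempty (Z ≅ jShriek.obj B) :=
      fun Z hZ => mem_jShriek_of_isZero iStar iS jShriek jStar a₁ b₁ hse.zero H6 Z hZ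
    refine ⟨inferInstance, inferInstance, inferInstance, inferInstance, inferInstance,
      inferInstance, H4, ?_, ?_⟩
    · intro X
      exact glue_triangle iS iShriek jStar jS a₂ b₂ (fun Z => inferInstance)
        (fun B B' f => hom_eq_of_isZero_left b₂ (H4 B) f 0) H6 X
    · intro X
      exact glue_triangle jShriek jStar iStar iS b₁ a₁ (fun Z => inferInstance)
        (fun B B' f => hom_eq_of_isZero_left a₁ (hse.zero B) f 0) H7 X
  · -- Case 2: the row (iS, jStar) is a short exact sequence
    haveI := hse.full
    haveI := hse.faithful
    haveI : jStar.IsLocalization (essImageSubcat iS).trW := hse.isLocalization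
    haveI hb2 : IsIso b₂.counit :=
      isIso_counit_of_isLocalization jStar (essImageSubcat iS).trW b₂
    haveI hb1 : IsIso b₁.unit :=
      isIso_unit_of_isLocalization jStar (essImageSubcat iS).trW b₁
    haveI : jS.Full := b₂.fullyFaithfulROfIsIsoCounit.full
    haveI : jS.Faithful := b₂.fullyFaithfulROfIsIsoCounit.faithful
    haveI : jShriek.Full := b₁.fullyFaithfulLOfIsIsoUnit.full
    haveI : jShriek.Faithful := b₁.fullyFaithfulLOfIsIsoUnit.faithful
    have H4 : ∀ A : T', IsZero (jStar.obj (iS.obj A)) := hse.zero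
    have hJI : ∀ (B : T'') (A : T') (f g : jShriek.obj B ⟶ iS.obj A), f = g := fun B A f g =>
      hom_eq_of_isZero_right b₁ (H4 A) f g
    have H5 : ∀ B : T'', IsZero (iStar.obj (jShriek.obj B)) := by
      intro B
      rw [IsZero.iff_id_eq_zero]
      exact (a₁.homEquiv _ _).injective (hJI _ _ _ _)
    have H6 : ∀ Y : T, IsZero (jStar.obj Y) → ∃ A : T', Nonempty (Y ≅ iS.obj A) := by
      intro Y hY
      obtain ⟨K₁, m, w, hT₂⟩ := distinguished_cocone_triangle (a₂.counit.app Y)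
      have hjK : IsZero (jStar.obj K₁) :=
        Triangle.isZero₃_of_isZero₁₂ _ (jStar.map_distinguished _ hT₂) (H4 _) hY
      have hiK : IsZero (iShriek.obj K₁) := by
        apply Triangle.isZero₃_of_isIso₁ _ (iShriek.map_distinguished _ hT₂)
        change IsIso (iShriek.map (a₂.counit.app Y))
        infer_instance
      have hallz : ∀ (Z : T), (essImageSubcat iS) Z → ∀ f : Z ⟶ K₁, f = 0 := by
        rintro Z ⟨A, ⟨e⟩⟩ f
        have h0 : e.inv ≫ f = 0 := hom_eq_of_isZero_right a₂ hiK (e.inv ≫ f) 0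
        calc f = e.hom ≫ (e.inv ≫ f) := by simp
        _ = 0 := by rw [h0, comp_zero]
      have hK : IsZero K₁ := by
        rw [IsZero.iff_id_eq_zero]
        exact orth_contra (essImageSubcat iS) jStar K₁ hallz hjK (𝟙 K₁)
      have : IsIso (a₂.counit.app Y) := (Triangle.isZero₃_iff_isIso₁ _ hT₂).1 hK
      exact ⟨iShriek.obj Y, ⟨(asIso (a₂.counit.app Y)).symm⟩⟩
    have H7 : ∀ Z : T, IsZero (iStar.obj Z) → ∃ B : T'', Nonempty (Z ≅ jShriek.obj B) :=
      fun Z hZ => mem_jShriek_of_isZero iStar iS jShriek jStar a₁ b₁ H5 H6 Z hZ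
    refine ⟨inferInstance, inferInstance, inferInstance, inferInstance, inferInstance,
      inferInstance, H4, ?_, ?_⟩
    · intro X
      exact glue_triangle iS iShriek jStar jS a₂ b₂ (fun Z => inferInstance)
        (fun B B' f => hom_eq_of_isZero_left b₂ (H4 B) f 0) H6 X
    · intro X
      exact glue_triangle jShriek jStar iStar iS b₁ a₁ (fun Z => inferInstance)
        (fun B B' f => hom_eq_of_isZero_left a₁ (H5 B) f 0) H7 X
  · -- Case 3: the row (jS, iShriek) is a short exact sequence
    haveI := hse.full
    haveI := hse.faithful
    haveI : iShriek.IsLocalization (essImageSubcat jS).trW := hse.isLocalization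
    haveI ha2u : IsIso a₂.unit :=
      isIso_unit_of_isLocalization iShriek (essImageSubcat jS).trW a₂
    haveI : iS.Full := a₂.fullyFaithfulLOfIsIsoUnit.full
    haveI : iS.Faithful := a₂.fullyFaithfulLOfIsIsoUnit.faithful
    haveI : IsIso b₂.counit := inferInstance
    haveI : IsIso b₁.unit := isIso_unit_of_isIso_counit b₁ b₂
    haveI : jShriek.Full := b₁.fullyFaithfulLOfIsIsoUnit.full
    haveI : jShriek.Faithful := b₁.fullyFaithfulLOfIsIsoUnit.faithful
    have hIJ : ∀ (A : T') (B : T'') (f g : iS.obj A ⟶ jS.obj B), f = g := fun A B f g =>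
      hom_eq_of_isZero_right a₂ (hse.zero B) f g
    have H4 : ∀ A : T', IsZero (jStar.obj (iS.obj A)) := by
      intro A
      rw [IsZero.iff_id_eq_zero]
      exact (b₂.homEquiv _ _).injective (hIJ _ _ _ _)
    have H5 : ∀ B : T'', IsZero (iStar.obj (jShriek.obj B)) := by
      intro B
      rw [IsZero.iff_id_eq_zero]
      exact (a₁.homEquiv _ _).injective (hom_eq_of_isZero_right b₁ (H4 _) _ _)
    have H6 : ∀ Y : T, IsZero (jStar.obj Y) → ∃ A : T', Nonempty (Y ≅ iS.obj A) := by
      intro Y hY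
      obtain ⟨K₁, m, w, hT₂⟩ := distinguished_cocone_triangle (a₂.counit.app Y)
      have hjK : IsZero (jStar.obj K₁) :=
        Triangle.isZero₃_of_isZero₁₂ _ (jStar.map_distinguished _ hT₂) (H4 _) hY
      have hiK : IsZero (iShriek.obj K₁) := by
        apply Triangle.isZero₃_of_isIso₁ _ (iShriek.map_distinguished _ hT₂)
        change IsIso (iShriek.map (a₂.counit.app Y))
        infer_instance
      have hallz : ∀ (Z : T), (essImageSubcat jS) Z → ∀ f : K₁ ⟶ Z, f = 0 := by
        rintro Z ⟨B, ⟨e⟩⟩ f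
        have h0 : f ≫ e.hom = 0 := hom_eq_of_isZero_left b₂ hjK (f ≫ e.hom) 0
        calc f = (f ≫ e.hom) ≫ e.inv := by simp
        _ = 0 := by rw [h0, zero_comp]
      have hK : IsZero K₁ := by
        rw [IsZero.iff_id_eq_zero]
        exact orth_cov (essImageSubcat jS) iShriek K₁ hallz hiK (𝟙 K₁)
      have : IsIso (a₂.counit.app Y) := (Triangle.isZero₃_iff_isIso₁ _ hT₂).1 hK
      exact ⟨iShriek.obj Y, ⟨(asIso (a₂.counit.app Y)).symm⟩⟩
    have H7 : ∀ Z : T, IsZero (iStar.obj Z) → ∃ B : T'', Nonempty (Z ≅ jShriek.obj B) :=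
      fun Z hZ => mem_jShriek_of_isZero iStar iS jShriek jStar a₁ b₁ H5 H6 Z hZ
    refine ⟨inferInstance, inferInstance, inferInstance, inferInstance, inferInstance,
      inferInstance, H4, ?_, ?_⟩
    · intro X
      exact glue_triangle iS iShriek jStar jS a₂ b₂ (fun Z => inferInstance)
        (fun B B' f => hom_eq_of_isZero_left b₂ (H4 B) f 0) H6 X
    · intro X
      exact glue_triangle jShriek jStar iStar iS b₁ a₁ (fun Z => inferInstance)
        (fun B B' f => hom_eq_of_isZero_left a₁ (H5 B) f 0) H7 X


end Paper
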